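/- arXiv:1712.04225 — 11 statements merged into one kernel-verified Lean document; each statement's English description precedes it below -/
import Mathlib

section
/- Let a, b, d < 0 and c > 0, and let W_n be the normalized sequence with W_0 = 1, W_1 = z, W_n = (az+b)W_{n-1} + (cz+d)W_{n-2}. Set x_A = −b/a and x_B = −d/c. Then for all n ≥ 1, W_n(x_A) = (c(x_A − x_B))^{n/2} if n is even, and W_n(x_A) = (c(x_A − x_B))^{(n−1)/2}·x_A if n is odd; consequently (−1)^{⌈n/2⌉}·W_n(x_A) > 0. -/
open Polynomial

theorem stmt_6 (a b c d : ℝ) (ha : a < 0) (hb : b < 0) (hd : d < 0) (hc : 0 < c)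
    (W : ℕ → Polynomial ℝ)
    (hW0 : W 0 = 1) (hW1 : W 1 = X)
    (hrec : ∀ n, 2 ≤ n →
      W n = (C a * X + C b) * W (n - 1) + (C c * X + C d) * W (n - 2)) :
    ∀ n, 1 ≤ n →
      (Even n → (W n).eval (-b / a) = (c * (-b / a - -d / c)) ^ (n / 2)) ∧
      (Odd n → (W n).eval (-b / a) = (c * (-b / a - -d / c)) ^ ((n - 1) / 2) * (-b / a)) ∧
      0 < (-1 : ℝ) ^ ((n + 1) / 2) * (W n).eval (-b / a) := by
  have ha' : a ≠ 0 := ne_of_lt ha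
  have hc' : c ≠ 0 := ne_of_gt hc
  set x : ℝ := -b / a with hx
  have hx0 : x < 0 := div_neg_of_pos_of_neg (by linarith) ha
  have hax : a * x + b = 0 := by rw [hx, mul_div_assoc', mul_neg, neg_div, mul_div_cancel_left₀ b ha']; ring
  set K : ℝ := c * x + d with hK
  have hK0 : K < 0 := by
    have : c * x < 0 := mul_neg_of_pos_of_neg hc hx0
    linarith
  have hKform : c * (x - -d / c) = K := by field_simp [hK]; ring
  have key : ∀ n, 2 ≤ n → (W n).eval x = K * (W (n - 2)).eval x := by
    intro n hn
    rw [hrec n hn]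
    simp only [eval_add, eval_mul, eval_C, eval_X]
    linear_combination (W (n - 1)).eval x * hax
  have main : ∀ m, (W (2 * m + 1)).eval x = K ^ m * x ∧
      (W (2 * m + 2)).eval x = K ^ (m + 1) := by
    intro m
    induction m with
    | zero =>
      constructor
      · simp [hW1]
      · have h := key 2 (by norm_num)
        simp only [show (2 : ℕ) - 2 = 0 from rfl, hW0, eval_one, mul_one] at h
        simpa using h
    | succ k ih =>
      obtain ⟨ih1, ih2⟩ := ih
      have e3 : 2 * (k + 1) + 1 = 2 * k + 3 := by ring
      have e4 : 2 * (k + 1) + 2 = 2 * k + 4 := by ring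
      have h1 := key (2 * k + 3) (by omega)
      have h2 := key (2 * k + 4) (by omega)
      rw [show 2 * k + 3 - 2 = 2 * k + 1 from by omega] at h1
      rw [show 2 * k + 4 - 2 = 2 * k + 2 from by omega] at h2
      constructor
      · rw [e3, h1, ih1]; ring
      · rw [e4, h2, ih2]; ring
  intro n hn
  rcases Nat.even_or_odd n with he | ho
  · obtain ⟨m, hm⟩ := he
    have hm1 : 1 ≤ m := by omega
    have hn2 : n = 2 * (m - 1) + 2 := by omega
    have hev : (W n).eval x = K ^ m := by
      rw [hn2]
      rw [(main (m - 1)).2, show m - 1 + 1 = m from by omega]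
    refine ⟨fun _ => ?_, fun hodd => ?_, ?_⟩
    · rw [hev, hKform, show n / 2 = m from by omega]
    · rw [Nat.odd_iff] at hodd; omega
    · rw [hev, show (n + 1) / 2 = m from by omega]
      have hpos : (0:ℝ) < (-K) ^ m := pow_pos (by linarith) m
      rwa [show -K = (-1) * K from by ring, mul_pow] at hpos
  · obtain ⟨m, hm⟩ := ho
    have hodd : (W n).eval x = K ^ m * x := by
      rw [hm]; exact (main m).1
    refine ⟨fun hev => ?_, fun _ => ?_, ?_⟩
    · rw [Nat.even_iff] at hev; omega
    · rw [hodd, hKform, show (n - 1) / 2 = m from by omega]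
    · rw [hodd, show (n + 1) / 2 = m + 1 from by omega]
      have : (-1 : ℝ) ^ (m + 1) * (K ^ m * x) = (-K) ^ m * (-x) := by
        rw [show -K = (-1) * K from by ring, mul_pow]; ring
      rw [this]
      exact mul_pos (pow_pos (by linarith) m) (by linarith)
end

section
/- Let a, b, d < 0 and c > 0. Define x_Δ^± = (−ab − 2c ± 2√(Δ_Δ))/a² where Δ_Δ = −a²d + abc + c², assumed nonnegative, and x_A = −b/a, x_B = −d/c. Then x_Δ^− < x_A < 0 < x_B and x_A < x_Δ^+ < x_B. -/
theorem stmt_8 (a b c d : ℝ) (ha : a < 0) (hb : b < 0) (hd : d < 0) (hc : 0 < c)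
    (hΔΔ : 0 ≤ -a ^ 2 * d + a * b * c + c ^ 2) :
    (-a * b - 2 * c - 2 * Real.sqrt (-a ^ 2 * d + a * b * c + c ^ 2)) / a ^ 2 < -b / a ∧
    -b / a < 0 ∧ (0 : ℝ) < -d / c ∧
    -b / a < (-a * b - 2 * c + 2 * Real.sqrt (-a ^ 2 * d + a * b * c + c ^ 2)) / a ^ 2 ∧
    (-a * b - 2 * c + 2 * Real.sqrt (-a ^ 2 * d + a * b * c + c ^ 2)) / a ^ 2 < -d / c := by
  set s := Real.sqrt (-a ^ 2 * d + a * b * c + c ^ 2) with hs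
  have hs0 : 0 ≤ s := Real.sqrt_nonneg _
  have hs2 : s ^ 2 = -a ^ 2 * d + a * b * c + c ^ 2 := Real.sq_sqrt hΔΔ
  have ha2 : 0 < a ^ 2 := by nlinarith
  have hane : a ≠ 0 := ne_of_lt ha
  have hcs : c < s := by nlinarith [mul_pos (mul_pos_of_neg_of_neg ha hb) hc, mul_pos ha2 (neg_pos.mpr hd)]
  have hxa : -b / a = (-a * b) / a ^ 2 := by field_simp
  refine ⟨?_, ?_, ?_, ?_, ?_⟩
  · rw [hxa, div_lt_div_iff₀ ha2 ha2]; nlinarith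
  · rw [div_neg_iff]; left; constructor <;> linarith
  · exact div_pos (by linarith) hc
  · rw [hxa, div_lt_div_iff₀ ha2 ha2]; nlinarith
  · rw [div_lt_div_iff₀ ha2 hc]; nlinarith [sq_nonneg (s - c)]
end

section
/- Let a, b, d < 0 and c > 0, and let W_n be the normalized sequence. If x_Δ^− = (−ab − 2c − 2√(Δ_Δ))/a² is real (i.e. Δ_Δ = −a²d + abc + c² ≥ 0), then W_n(x_Δ^−) < 0 for all n ≥ 1. -/
open Polynomial

theorem stmt_9 (a b c d : ℝ) (ha : a < 0) (hb : b < 0) (hd : d < 0) (hc : 0 < c)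
    (hΔΔ : 0 ≤ -a ^ 2 * d + a * b * c + c ^ 2)
    (W : ℕ → Polynomial ℝ)
    (hW0 : W 0 = 1) (hW1 : W 1 = X)
    (hrec : ∀ n, 2 ≤ n →
      W n = (C a * X + C b) * W (n - 1) + (C c * X + C d) * W (n - 2)) :
    ∀ n, 1 ≤ n →
      (W n).eval ((-a * b - 2 * c - 2 * Real.sqrt (-a ^ 2 * d + a * b * c + c ^ 2)) / a ^ 2)
        < 0 := by
  set s : ℝ := Real.sqrt (-a ^ 2 * d + a * b * c + c ^ 2) with hsdef
  have hs0 : 0 ≤ s := Real.sqrt_nonneg _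
  have hs2 : s ^ 2 = -a ^ 2 * d + a * b * c + c ^ 2 := Real.sq_sqrt hΔΔ
  have hane : a ≠ 0 := ne_of_lt ha
  have ha2 : (0:ℝ) < a ^ 2 := by positivity
  set x : ℝ := (-a * b - 2 * c - 2 * s) / a ^ 2 with hxdef
  set A : ℝ := a * x + b with hAdef
  -- A = -2(c+s)/a > 0
  have hA : A = -2 * (c + s) / a := by
    rw [hAdef, hxdef]; field_simp; ring
  have hApos : 0 < A := by
    rw [hA]
    apply div_pos_of_neg_of_neg _ ha
    nlinarith
  -- x < 0
  have hxneg : x < 0 := by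
    rw [hxdef]
    apply div_neg_of_neg_of_pos _ ha2
    nlinarith
  -- key identity: A^2 + 4(cx+d) = 0
  have key : A ^ 2 + 4 * (c * x + d) = 0 := by
    have h1 : A ^ 2 = 4 * (c + s) ^ 2 / a ^ 2 := by
      rw [hA]; field_simp; ring
    have h2 : x * a ^ 2 = -a * b - 2 * c - 2 * s := by
      rw [hxdef]; field_simp
    have : a ^ 2 * (A ^ 2 + 4 * (c * x + d)) = 0 := by
      rw [mul_add, mul_comm (a^2) (A^2), h1]
      field_simp
      nlinarith [hs2, h2]
    exact (mul_eq_zero.mp this).resolve_left (ne_of_gt ha2)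
  have hB : c * x + d = -(A ^ 2) / 4 := by linear_combination key / 4
  set h : ℝ := 2 * x - A with hhdef
  have hhneg : h < 0 := by rw [hhdef]; linarith
  -- closed form: eval x (W (n+1)) = (A + (n+1) h)/2 * (A/2)^n
  have closed : ∀ n : ℕ,
      (W (n + 1)).eval x = (A + (n + 1 : ℕ) * h) / 2 * (A / 2) ^ n := by
    have main : ∀ n : ℕ,
        (W (n + 1)).eval x = (A + (n + 1 : ℕ) * h) / 2 * (A / 2) ^ n ∧
        (W (n + 2)).eval x = (A + (n + 2 : ℕ) * h) / 2 * (A / 2) ^ (n + 1) := by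
      intro n
      induction n with
      | zero =>
        constructor
        · rw [hW1]; simp only [eval_X, hhdef]; push_cast; ring
        · have h2 := hrec 2 (by norm_num)
          norm_num at h2
          rw [h2]
          simp [hW0, hW1]
          rw [show a * x + b = A from rfl]
          rw [hB]
          push_cast
          rw [hhdef]
          ring
      | succ m ih =>
        refine ⟨ih.2, ?_⟩
        have h3 := hrec (m + 3) (by omega)
        have e1 : m + 3 - 1 = m + 2 := by omega
        have e2 : m + 3 - 2 = m + 1 := by omega
        rw [e1, e2] at h3
        have : (W (m + 3)).eval x
            = A * ((W (m + 2)).eval x) + (c * x + d) * ((W (m + 1)).eval x) := by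
          rw [h3]; simp only [eval_add, eval_mul, eval_X, eval_C]; rfl
        rw [show m + 1 + 2 = m + 3 from rfl, this, ih.1, ih.2, hB]
        push_cast
        ring
    exact fun n => (main n).1
  -- conclude
  intro n hn
  obtain ⟨m, rfl⟩ : ∃ m, n = m + 1 := ⟨n - 1, by omega⟩
  rw [closed m]
  have hpow : 0 < (A / 2) ^ m := by positivity
  have hcoef : (A + (m + 1 : ℕ) * h) / 2 < 0 := by
    have hm : (0:ℝ) ≤ (m : ℝ) := Nat.cast_nonneg m
    push_cast
    nlinarith
  exact mul_neg_of_neg_of_pos hcoef hpow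
end

section
/- Let a, b, d < 0 and 0 < c ≤ c^− = −2√(d(a−1)) − b. Then both roots x_g^± of g(z) = (1−a)z² − (b+c)z − d are real and negative, and consequently (−1)^n·W_n(x_g^±) > 0 for all n ≥ 0, where W_n is the normalized sequence. -/
open Polynomial

theorem stmt_11 (a b c d : ℝ) (ha : a < 0) (hb : b < 0) (hd : d < 0)
    (hc : 0 < c) (hcm : c ≤ -2 * Real.sqrt (d * (a - 1)) - b)
    (W : ℕ → Polynomial ℝ)
    (hW0 : W 0 = 1) (hW1 : W 1 = X)
    (hrec : ∀ n, 2 ≤ n →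
      W n = (C a * X + C b) * W (n - 1) + (C c * X + C d) * W (n - 2)) :
    0 ≤ (b + c) ^ 2 + 4 * d * (1 - a) ∧
    ∀ x : ℝ, (1 - a) * x ^ 2 - (b + c) * x - d = 0 →
      x < 0 ∧ ∀ n : ℕ, 0 < (-1 : ℝ) ^ n * (W n).eval x := by
  have hda : 0 ≤ d * (a - 1) := by nlinarith
  have hs := Real.sq_sqrt hda
  have hsnn := Real.sqrt_nonneg (d * (a - 1))
  set s := Real.sqrt (d * (a - 1)) with hsdef
  have hbc : b + c ≤ -2 * s := by linarith
  refine ⟨by nlinarith [sq_nonneg (b + c + 2 * s)], ?_⟩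
  intro x hx
  have h1a : 0 < 1 - a := by linarith
  have hxneg : x < 0 := by
    rcases lt_trichotomy x 0 with h | h | h
    · exact h
    · exfalso; rw [h] at hx; nlinarith
    · exfalso
      nlinarith [mul_pos h1a (mul_pos h h),
        mul_nonneg (by linarith : (0:ℝ) ≤ -(b + c)) h.le]
  refine ⟨hxneg, ?_⟩
  have key : ∀ n, (W n).eval x = x ^ n := by
    intro n
    induction n using Nat.strong_induction_on with
    | _ n ih =>
      match n with
      | 0 => simp [hW0]
      | 1 => simp [hW1]
      | (m + 2) =>
        have e1 : m + 2 - 1 = m + 1 := rfl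
        have e2 : m + 2 - 2 = m := rfl
        rw [hrec (m + 2) (by omega), e1, e2]
        simp only [eval_add, eval_mul, eval_C, eval_X]
        rw [ih (m + 1) (by omega), ih m (by omega)]
        linear_combination (-(x ^ m)) * hx
  intro n
  rw [key n, ← mul_pow, neg_one_mul]
  exact pow_pos (by linarith) n
end

section
/- Let a, b, d < 0 and c ≥ c^+ = 2√(d(a−1)) − b. Then both roots x_g^± of g(z) = (1−a)z² − (b+c)z − d are real and positive, and consequently W_n(x_g^±) > 0 for all n ≥ 0, where W_n is the normalized sequence. -/
open Polynomial

theorem stmt_12 (a b c d : ℝ) (ha : a < 0) (hb : b < 0) (hd : d < 0)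
    (hc : 2 * Real.sqrt (d * (a - 1)) - b ≤ c)
    (W : ℕ → Polynomial ℝ)
    (hW0 : W 0 = 1) (hW1 : W 1 = X)
    (hrec : ∀ n, 2 ≤ n →
      W n = (C a * X + C b) * W (n - 1) + (C c * X + C d) * W (n - 2)) :
    0 ≤ (b + c) ^ 2 + 4 * d * (1 - a) ∧
    ∀ x : ℝ, (1 - a) * x ^ 2 - (b + c) * x - d = 0 →
      0 < x ∧ ∀ n : ℕ, 0 < (W n).eval x := by
  have hda : 0 ≤ d * (a - 1) := by nlinarith
  have hs := Real.sq_sqrt hda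
  have hs0 := Real.sqrt_nonneg (d * (a - 1))
  have hbc : 0 ≤ b + c := by linarith
  constructor
  · nlinarith [sq_nonneg (b + c - 2 * Real.sqrt (d * (a - 1)))]
  · intro x hx
    have hxpos : 0 < x := by
      by_contra h
      push_neg at h
      nlinarith [mul_nonneg hbc (neg_nonneg.2 h), sq_nonneg x]
    refine ⟨hxpos, ?_⟩
    have hx2 : x ^ 2 = a * x ^ 2 + (b + c) * x + d := by nlinarith [hx]
    have key : ∀ n, (W n).eval x = x ^ n := by
      intro n
      induction n using Nat.strong_induction_on with
      | _ n ih =>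
        match n, ih with
        | 0, _ => simp [hW0]
        | 1, _ => simp [hW1]
        | (k + 2), ih =>
          rw [hrec (k + 2) (by omega), show k + 2 - 1 = k + 1 from rfl,
            show k + 2 - 2 = k from rfl]
          simp only [eval_add, eval_mul, eval_C, eval_X]
          rw [ih (k + 1) (by omega), ih k (by omega)]
          have h1 : x ^ (k + 2) = x ^ k * x ^ 2 := by ring
          rw [h1, hx2]
          ring
    intro n
    rw [key n]
    exact pow_pos hxpos n
end

section
/- Let a, b, d < 0 and c ≥ c^+ = 2√(d(a−1)) − b. Then x_B = −d/c < x_g^−, where x_g^− is the smaller root of g(z) = (1−a)z² − (b+c)z − d. -/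
theorem stmt_13 (a b c d : ℝ) (ha : a < 0) (hb : b < 0) (hd : d < 0)
    (hc : 2 * Real.sqrt (d * (a - 1)) - b ≤ c) :
    -d / c <
      ((b + c) - Real.sqrt ((b + c) ^ 2 + 4 * d * (1 - a))) / (2 * (1 - a)) := by
  set s := Real.sqrt (d * (a - 1)) with hs
  have hda : 0 < d * (a - 1) := mul_pos_of_neg_of_neg hd (by linarith)
  have hs0 : 0 < s := Real.sqrt_pos.2 hda
  have hs2 : s ^ 2 = d * (a - 1) := Real.sq_sqrt hda.le
  have hcpos : 0 < c := by linarith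
  have hbc : 2 * s ≤ b + c := by linarith
  have hΔ : 0 ≤ (b + c) ^ 2 + 4 * d * (1 - a) := by nlinarith
  set t := Real.sqrt ((b + c) ^ 2 + 4 * d * (1 - a)) with ht
  have ht0 : 0 ≤ t := Real.sqrt_nonneg _
  have ht2 : t ^ 2 = (b + c) ^ 2 + 4 * d * (1 - a) := Real.sq_sqrt hΔ
  have hK : 0 < c * (b + c) + 2 * d * (1 - a) := by nlinarith
  rw [div_lt_div_iff₀ hcpos (by linarith : (0:ℝ) < 2 * (1 - a))]
  have h1 : d * (1 - a) < 0 := mul_neg_of_neg_of_pos hd (by linarith)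
  have h2 : c * b + d * (1 - a) < 0 := by nlinarith [mul_pos_of_neg_of_neg hb h1]
  have hsq : (t * c) ^ 2 < (c * (b + c) + 2 * d * (1 - a)) ^ 2 := by
    nlinarith [mul_pos_of_neg_of_neg h1 h2]
  have htc : t * c < c * (b + c) + 2 * d * (1 - a) :=
    lt_of_pow_lt_pow_left₀ 2 hK.le hsq
  nlinarith
end

section
/- Let a, b, d < 0, c > 0, with Δ_Δ = −a²d + abc + c² ≥ 0, and let x_Δ^+ = (−ab − 2c + 2√Δ_Δ)/a². If c ≤ c^− = −2√(d(a−1)) − b, then x_Δ^+ ≤ x_g^−, where x_g^− is the smaller root of g(z) = (1−a)z² − (b+c)z − d. In fact, x_g^− − x_Δ^+ = 2(√Δ_Δ − √Δ_g)² / (a²√Δ_g + 4(1−a)√Δ_Δ − a²b + a²c + 2ab − 4ac + 4c) ≥ 0. -/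
theorem stmt_15 (a b c d : ℝ) (ha : a < 0) (hb : b < 0) (hd : d < 0)
    (hc : 0 < c) (hcm : c ≤ -2 * Real.sqrt (d * (a - 1)) - b)
    (hΔΔ : 0 ≤ -a ^ 2 * d + a * b * c + c ^ 2) :
    ((b + c) - Real.sqrt ((b + c) ^ 2 + 4 * d * (1 - a))) / (2 * (1 - a))
        - (-a * b - 2 * c + 2 * Real.sqrt (-a ^ 2 * d + a * b * c + c ^ 2)) / a ^ 2
      = 2 * (Real.sqrt (-a ^ 2 * d + a * b * c + c ^ 2)
              - Real.sqrt ((b + c) ^ 2 + 4 * d * (1 - a))) ^ 2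
        / (a ^ 2 * Real.sqrt ((b + c) ^ 2 + 4 * d * (1 - a))
            + 4 * (1 - a) * Real.sqrt (-a ^ 2 * d + a * b * c + c ^ 2)
            - a ^ 2 * b + a ^ 2 * c + 2 * a * b - 4 * a * c + 4 * c) ∧
    (-a * b - 2 * c + 2 * Real.sqrt (-a ^ 2 * d + a * b * c + c ^ 2)) / a ^ 2
      ≤ ((b + c) - Real.sqrt ((b + c) ^ 2 + 4 * d * (1 - a))) / (2 * (1 - a)) := by
  have h1a : (0:ℝ) < 1 - a := by linarith
  have ha2 : (0:ℝ) < a ^ 2 := by nlinarith [mul_pos_of_neg_of_neg ha ha]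
  set r := Real.sqrt (d * (a - 1)) with hr
  have hda : 0 ≤ d * (a - 1) := by nlinarith
  have hrsq : r ^ 2 = d * (a - 1) := Real.sq_sqrt hda
  have hrnn : 0 ≤ r := Real.sqrt_nonneg _
  have hΔg : 0 ≤ (b + c) ^ 2 + 4 * d * (1 - a) := by
    nlinarith [mul_nonneg (by linarith : (0:ℝ) ≤ -2*r - (b+c)) (by linarith : (0:ℝ) ≤ -(b+c))]
  set s := Real.sqrt (-a ^ 2 * d + a * b * c + c ^ 2) with hs
  set t := Real.sqrt ((b + c) ^ 2 + 4 * d * (1 - a)) with ht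
  have hss : s ^ 2 = -a ^ 2 * d + a * b * c + c ^ 2 := Real.sq_sqrt hΔΔ
  have hts : t ^ 2 = (b + c) ^ 2 + 4 * d * (1 - a) := Real.sq_sqrt hΔg
  have hsnn : 0 ≤ s := Real.sqrt_nonneg _
  have htnn : 0 ≤ t := Real.sqrt_nonneg _
  have hD : 0 < a ^ 2 * t + 4 * (1 - a) * s - a ^ 2 * b + a ^ 2 * c + 2 * a * b - 4 * a * c + 4 * c := by
    nlinarith [mul_nonneg ha2.le htnn, mul_nonneg h1a.le hsnn,
      mul_pos ha2 (neg_pos.mpr hb), mul_pos ha2 hc,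
      mul_pos (neg_pos.mpr ha) (neg_pos.mpr hb), mul_pos (neg_pos.mpr ha) hc]
  have h2ne : (2 * (1 - a)) ≠ 0 := ne_of_gt (by linarith)
  have hane : a ^ 2 ≠ 0 := ne_of_gt ha2
  have hkey : ((b + c) - t) / (2 * (1 - a)) - (-a * b - 2 * c + 2 * s) / a ^ 2
      = 2 * (s - t) ^ 2 / (a ^ 2 * t + 4 * (1 - a) * s - a ^ 2 * b + a ^ 2 * c + 2 * a * b - 4 * a * c + 4 * c) := by
    rw [div_sub_div _ _ h2ne hane, div_eq_div_iff (mul_ne_zero h2ne hane) (ne_of_gt hD)]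
    linear_combination (-(a^4 + 4*(1-a)*a^2)) * hts + (-(16*(1-a)^2 + 4*(1-a)*a^2)) * hss
  refine ⟨hkey, ?_⟩
  have hge : 0 ≤ 2 * (s - t) ^ 2 / (a ^ 2 * t + 4 * (1 - a) * s - a ^ 2 * b + a ^ 2 * c + 2 * a * b - 4 * a * c + 4 * c) :=
    div_nonneg (by positivity) hD.le
  linarith [hkey]
end

section
/- Let a, b, d < 0, c > 0 with Δ_Δ = −a²d + abc + c² > 0, and let x_Δ^+ be the larger root of Δ(z) = a²z² + (2ab+4c)z + (b²+4d). Then h(x_Δ^+) = 2(Δ_Δ − Δ_g)/(ab − ac + 2c + (2−a)√Δ_Δ), where h(z) = (2−a)z − b and Δ_g = (b+c)² + 4d(1−a); in particular h(x_Δ^+) and Δ_Δ − Δ_g have the same sign. -/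
theorem stmt_16 (a b c d : ℝ) (ha : a < 0) (hb : b < 0) (hd : d < 0) (hc : 0 < c)
    (hΔΔ : 0 < -a ^ 2 * d + a * b * c + c ^ 2) :
    (2 - a) * ((-a * b - 2 * c + 2 * Real.sqrt (-a ^ 2 * d + a * b * c + c ^ 2)) / a ^ 2) - b
      = 2 * ((-a ^ 2 * d + a * b * c + c ^ 2) - ((b + c) ^ 2 + 4 * d * (1 - a)))
        / (a * b - a * c + 2 * c
            + (2 - a) * Real.sqrt (-a ^ 2 * d + a * b * c + c ^ 2)) ∧
    (0 < (2 - a) * ((-a * b - 2 * c + 2 * Real.sqrt (-a ^ 2 * d + a * b * c + c ^ 2)) / a ^ 2) - b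
      ↔ (b + c) ^ 2 + 4 * d * (1 - a) < -a ^ 2 * d + a * b * c + c ^ 2) ∧
    ((2 - a) * ((-a * b - 2 * c + 2 * Real.sqrt (-a ^ 2 * d + a * b * c + c ^ 2)) / a ^ 2) - b < 0
      ↔ -a ^ 2 * d + a * b * c + c ^ 2 < (b + c) ^ 2 + 4 * d * (1 - a)) := by
  set s := Real.sqrt (-a ^ 2 * d + a * b * c + c ^ 2) with hsdef
  have hs2 : s ^ 2 = -a ^ 2 * d + a * b * c + c ^ 2 := Real.sq_sqrt hΔΔ.le
  have hspos : 0 < s := Real.sqrt_pos.mpr hΔΔ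
  have hab : 0 < a * b := mul_pos_of_neg_of_neg ha hb
  have hD : 0 < a * b - a * c + 2 * c + (2 - a) * s := by nlinarith
  have ha2 : (a : ℝ) ^ 2 ≠ 0 := pow_ne_zero 2 ha.ne
  have key : (2 - a) * ((-a * b - 2 * c + 2 * s) / a ^ 2) - b
      = 2 * ((-a ^ 2 * d + a * b * c + c ^ 2) - ((b + c) ^ 2 + 4 * d * (1 - a)))
        / (a * b - a * c + 2 * c + (2 - a) * s) := by
    rw [eq_div_iff hD.ne']
    field_simp
    rw [div_sub' ha2, div_mul_eq_mul_div, div_eq_iff ha2]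
    linear_combination 2 * (2 - a) ^ 2 * hs2
  refine ⟨key, ?_, ?_⟩
  · rw [key, lt_div_iff₀ hD]
    constructor <;> intro h <;> nlinarith
  · rw [key, div_lt_iff₀ hD]
    constructor <;> intro h <;> nlinarith
end

section
/- Let a, b, d < 0 and c ≥ c^+ = 2√(d(a−1)) − b, and let (W_n) be the normalized polynomial sequence. Suppose W_3(z) = a²z³ + (2ab+ac+c)z² + (ad+bc+b²+d)z + bd has three real roots x₁, x₂, x₃ with x₁ < x_A = −b/a. Then x₁ is the unique negative root of W_3; i.e., x₂ > 0 and x₃ > 0. -/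
set_option maxHeartbeats 400000 in
theorem stmt_17 (a b c d : ℝ) (ha : a < 0) (hb : b < 0) (hd : d < 0)
    (hc : 2 * Real.sqrt (d * (a - 1)) - b ≤ c)
    (x₁ x₂ x₃ : ℝ)
    (hfact : ∀ z : ℝ,
      a ^ 2 * z ^ 3 + (2 * a * b + a * c + c) * z ^ 2
        + (a * d + b * c + b ^ 2 + d) * z + b * d
      = a ^ 2 * (z - x₁) * (z - x₂) * (z - x₃))
    (hx1 : x₁ < -b / a) :
    0 < x₂ ∧ 0 < x₃ := by
  have ha2 : (0:ℝ) < a ^ 2 := by nlinarith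
  have hxa : -b / a < 0 := div_neg_of_pos_of_neg (by linarith) ha
  have hx1n : x₁ < 0 := lt_trans hx1 hxa
  -- Vieta
  have hP : b * d = -(a ^ 2) * (x₁ * x₂ * x₃) := by linear_combination hfact 0
  have hU : 2 * a * b + a * c + c = -(a ^ 2) * (x₁ + x₂ + x₃) := by
    linear_combination (hfact 1 + hfact (-1)) / 2 - hfact 0
  have hV : a * d + b * c + b ^ 2 + d = a ^ 2 * (x₁ * x₂ + x₁ * x₃ + x₂ * x₃) := by
    linear_combination (hfact 1 - hfact (-1)) / 2
  have hprod : 0 < x₂ * x₃ := by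
    by_contra hle
    push_neg at hle
    have h1 : 0 ≤ x₁ * x₂ * x₃ := by
      have := mul_nonneg (neg_nonneg.2 hx1n.le) (neg_nonneg.2 hle)
      nlinarith
    nlinarith [mul_nonneg ha2.le h1, mul_pos (neg_pos.2 hb) (neg_pos.2 hd)]
  by_contra hcon
  have hboth : x₂ < 0 ∧ x₃ < 0 := by
    rcases not_and_or.1 hcon with h | h <;> push_neg at h
    · have h2 : x₂ < 0 := by
        rcases lt_or_eq_of_le h with h' | h'
        · exact h'
        · rw [h'] at hprod; norm_num at hprod
      refine ⟨h2, ?_⟩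
      by_contra h3
      push_neg at h3
      nlinarith [mul_nonneg (neg_nonneg.2 h2.le) h3]
    · have h3 : x₃ < 0 := by
        rcases lt_or_eq_of_le h with h' | h'
        · exact h'
        · rw [h'] at hprod; norm_num at hprod
      refine ⟨?_, h3⟩
      by_contra h2
      push_neg at h2
      nlinarith [mul_nonneg h2 (neg_nonneg.2 h3.le)]
  obtain ⟨hx2, hx3⟩ := hboth
  set s := Real.sqrt (d * (a - 1)) with hsdef
  have hs2 : s ^ 2 = d * (a - 1) := Real.sq_sqrt (by nlinarith)
  have hs0 : 0 ≤ s := Real.sqrt_nonneg _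
  have hsum : 0 < -(x₁ + x₂ + x₃) := by linarith
  have hUpos : 0 < 2 * a * b + a * c + c := by nlinarith [mul_pos ha2 hsum]
  have hsum2 : 0 < x₁ * x₂ + x₁ * x₃ + x₂ * x₃ := by
    nlinarith [mul_pos_of_neg_of_neg hx1n hx2, mul_pos_of_neg_of_neg hx1n hx3,
      mul_pos_of_neg_of_neg hx2 hx3]
  have hVpos : 0 < a * d + b * c + b ^ 2 + d := by nlinarith [mul_pos ha2 hsum2]
  have hbc : b * c ≤ 2 * b * s - b ^ 2 := by
    nlinarith [mul_nonneg (neg_nonneg.2 hb.le) (sub_nonneg.2 hc)]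
  have hB : 0 < d * (a + 1) + 2 * b * s := by nlinarith
  rcases le_or_gt 0 (a + 1) with h1 | h1
  · have e1 : d * (a + 1) ≤ 0 := mul_nonpos_of_nonpos_of_nonneg hd.le h1
    have e2 : 2 * b * s ≤ 0 := by
      have := mul_nonneg (neg_nonneg.2 hb.le) hs0
      nlinarith
    linarith
  · have hA : 0 < b * (a - 1) + 2 * s * (a + 1) := by
      nlinarith [mul_nonneg (neg_nonneg.2 h1.le) (sub_nonneg.2 hc)]
    have e4 : 0 ≤ -(2 * s * (a + 1)) := by
      have := mul_nonneg hs0 (neg_nonneg.2 h1.le)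
      nlinarith
    have e5 : -(2 * s * (a + 1)) < b * (a - 1) := by linarith
    have e6 := mul_self_lt_mul_self e4 e5
    have hsa : s ^ 2 * (a + 1) ^ 2 = d * (a - 1) * (a + 1) ^ 2 := by rw [hs2]
    have hA2 : 4 * (d * (a - 1)) * (a + 1) ^ 2 < b ^ 2 * (a - 1) ^ 2 := by
      linarith [e6, hsa]
    have e7 : 0 ≤ -(2 * b * s) := by
      have := mul_nonneg (neg_nonneg.2 hb.le) hs0
      nlinarith
    have e8 : -(2 * b * s) < d * (a + 1) := by linarith
    have e9 := mul_self_lt_mul_self e7 e8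
    have hsb : s ^ 2 * b ^ 2 = d * (a - 1) * b ^ 2 := by rw [hs2]
    have hB2 : 4 * b ^ 2 * (d * (a - 1)) < d ^ 2 * (a + 1) ^ 2 := by
      linarith [e9, hsb]
    have keyQ : (a - 1) * (b ^ 2 * (a - 1) - 4 * d * (a + 1) ^ 2)
        = b ^ 2 * (a - 1) ^ 2 - 4 * (d * (a - 1)) * (a + 1) ^ 2 := by ring
    have hQ : b ^ 2 * (a - 1) - 4 * d * (a + 1) ^ 2 < 0 := by
      by_contra hcq
      push_neg at hcq
      have := mul_nonpos_of_nonpos_of_nonneg (show a - 1 ≤ 0 by linarith) hcq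
      linarith [keyQ ▸ this]
    have keyR : d * (d * (a + 1) ^ 2 - 4 * (b ^ 2 * (a - 1)))
        = d ^ 2 * (a + 1) ^ 2 - 4 * b ^ 2 * (d * (a - 1)) := by ring
    have hR : d * (a + 1) ^ 2 - 4 * (b ^ 2 * (a - 1)) < 0 := by
      by_contra hcr
      push_neg at hcr
      have := mul_nonpos_of_nonpos_of_nonneg hd.le hcr
      linarith [keyR ▸ this]
    have hP0 : d * (a + 1) ^ 2 ≤ 0 :=
      mul_nonpos_of_nonpos_of_nonneg hd.le (sq_nonneg _)
    linarith [hQ, hR, hP0]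
end

section
/- Let a, b, c, d be reals with a ≠ 0, c ≠ 0, and let W_3(z) = a²z³ + (2ab+ac+c)z² + (ad+bc+b²+d)z + bd be the third polynomial of the normalized sequence. If ξ is a real root of W_3 with F(ξ) ≠ 0, where F(z) = (az+b)² + (cz+d) = a²z² + (2ab+c)z + (b²+d), then ξ = −(aξ+b)(cξ+d)/F(ξ), and g(ξ) = −(cξ+d)³/F(ξ)², where g(z) = (1−a)z² − (b+c)z − d. In particular g(ξ) > 0 implies cξ + d < 0. -/
theorem stmt_18 (a b c d : ℝ) (ha : a ≠ 0) (hc : c ≠ 0) (ξ : ℝ)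
    (hroot : a ^ 2 * ξ ^ 3 + (2 * a * b + a * c + c) * ξ ^ 2
        + (a * d + b * c + b ^ 2 + d) * ξ + b * d = 0)
    (hF : a ^ 2 * ξ ^ 2 + (2 * a * b + c) * ξ + (b ^ 2 + d) ≠ 0) :
    ξ = -((a * ξ + b) * (c * ξ + d)) / (a ^ 2 * ξ ^ 2 + (2 * a * b + c) * ξ + (b ^ 2 + d)) ∧
    (1 - a) * ξ ^ 2 - (b + c) * ξ - d
      = -(c * ξ + d) ^ 3 / (a ^ 2 * ξ ^ 2 + (2 * a * b + c) * ξ + (b ^ 2 + d)) ^ 2 ∧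
    (0 < (1 - a) * ξ ^ 2 - (b + c) * ξ - d → c * ξ + d < 0) := by
  set F := a ^ 2 * ξ ^ 2 + (2 * a * b + c) * ξ + (b ^ 2 + d) with hFdef
  have h1 : ξ = -((a * ξ + b) * (c * ξ + d)) / F := by
    rw [eq_div_iff hF]
    linear_combination hroot
  have h2 : (1 - a) * ξ ^ 2 - (b + c) * ξ - d = -(c * ξ + d) ^ 3 / F ^ 2 := by
    rw [eq_div_iff (pow_ne_zero 2 hF)]
    linear_combination (a ^ 2 * ξ ^ 3 + (2 * a * b + a * c + c) * ξ ^ 2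
        + (a * d + b * c + b ^ 2 + d) * ξ + b * d
        - 2 * (a * ξ + b) * (c * ξ + d) - (a * ξ + b) * F) * hroot
  refine ⟨h1, h2, fun hg => ?_⟩
  have hF2 : (0:ℝ) < F ^ 2 := by positivity
  rw [h2] at hg
  have hB3 : (c * ξ + d) ^ 3 < 0 := by
    have := (div_pos_iff.mp hg)
    rcases this with ⟨h, _⟩ | ⟨_, h⟩
    · linarith
    · linarith
  nlinarith [sq_nonneg (c * ξ + d)]
end

section
/- Let a, b, d < 0 and c ≥ c^+ = 2√(d(a−1)) − b, with Δ_Δ = −a²d + abc + c² > 0 and x_Δ^+ = (−ab − 2c + 2√Δ_Δ)/a² the larger root of Δ(z) = a²z² + (2ab+4c)z + (b²+4d). Then F(x_Δ^+) = −3(c·x_Δ^+ + d) > 0, where F(z) = a²z² + (2ab+c)z + (b²+d); in particular the unique positive zero x₀ of F satisfies x₀ < x_Δ^+. -/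
theorem stmt_19 (a b c d : ℝ) (ha : a < 0) (hb : b < 0) (hd : d < 0)
    (hc : 2 * Real.sqrt (d * (a - 1)) - b ≤ c)
    (hΔΔ : 0 < -a ^ 2 * d + a * b * c + c ^ 2) :
    (a ^ 2 * ((-a * b - 2 * c + 2 * Real.sqrt (-a ^ 2 * d + a * b * c + c ^ 2)) / a ^ 2) ^ 2
        + (2 * a * b + c) * ((-a * b - 2 * c + 2 * Real.sqrt (-a ^ 2 * d + a * b * c + c ^ 2)) / a ^ 2)
        + (b ^ 2 + d)
      = -3 * (c * ((-a * b - 2 * c + 2 * Real.sqrt (-a ^ 2 * d + a * b * c + c ^ 2)) / a ^ 2) + d)) ∧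
    0 < -3 * (c * ((-a * b - 2 * c + 2 * Real.sqrt (-a ^ 2 * d + a * b * c + c ^ 2)) / a ^ 2) + d) ∧
    ∀ x₀ : ℝ, 0 < x₀ →
      a ^ 2 * x₀ ^ 2 + (2 * a * b + c) * x₀ + (b ^ 2 + d) = 0 →
      x₀ < (-a * b - 2 * c + 2 * Real.sqrt (-a ^ 2 * d + a * b * c + c ^ 2)) / a ^ 2 := by
  set s := Real.sqrt (-a ^ 2 * d + a * b * c + c ^ 2) with hs
  have hs0 : 0 ≤ s := Real.sqrt_nonneg _
  have hs2 : s ^ 2 = -a ^ 2 * d + a * b * c + c ^ 2 := Real.sq_sqrt hΔΔ.le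
  have hsq : 0 ≤ Real.sqrt (d * (a - 1)) := Real.sqrt_nonneg _
  have hc0 : 0 < c := by linarith
  have hbc : b * c - a * d < 0 := by
    nlinarith [mul_neg_of_neg_of_pos hb hc0, mul_pos_of_neg_of_neg ha hd]
  have hcs : c < s := by nlinarith [mul_pos_of_neg_of_neg ha hbc]
  have ha2 : (a : ℝ) ^ 2 ≠ 0 := pow_ne_zero _ (ne_of_lt ha)
  set x := (-a * b - 2 * c + 2 * s) / a ^ 2 with hxdef
  have hx : a ^ 2 * x = -a * b - 2 * c + 2 * s := by
    rw [hxdef]; field_simp [ha.ne]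
  have heq : a ^ 2 * x ^ 2 + (2 * a * b + c) * x + (b ^ 2 + d)
      = -3 * (c * x + d) := by
    have h : a ^ 2 * (a ^ 2 * x ^ 2 + (2 * a * b + c) * x + (b ^ 2 + d))
        = a ^ 2 * (-3 * (c * x + d)) := by
      linear_combination (a ^ 2 * x + a * b + 2 * c + 2 * s) * hx + 4 * hs2
    exact mul_left_cancel₀ ha2 h
  have hcx : c * x + d < 0 := by
    -- c * (a^2 * x) + a^2 * d < 0  ⟺  -(c-s)^2 < 0
    have h1 : a ^ 2 * (c * x + d) = -(c - s) ^ 2 := by linear_combination c * hx + hs2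
    have h2 : 0 < a ^ 2 * (-(c * x + d)) := by
      rw [show a ^ 2 * (-(c * x + d)) = (c - s) ^ 2 by linarith]
      nlinarith
    nlinarith [sq_nonneg a]
  have hpos : 0 < -3 * (c * x + d) := by linarith
  refine ⟨heq, hpos, ?_⟩
  intro x₀ _ hF
  by_contra h
  push_neg at h
  -- x₀ ≥ x, and x is beyond the vertex of F since 4s > 3c
  have hvert : 2 * a ^ 2 * x + 2 * a * b + c > 0 := by linarith [hx]
  have hFx : 0 < a ^ 2 * x ^ 2 + (2 * a * b + c) * x + (b ^ 2 + d) := by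
    rw [heq]; exact hpos
  nlinarith [mul_nonneg (sub_nonneg.mpr h) hvert.le,
    mul_nonneg (sq_nonneg a) (sq_nonneg (x₀ - x))]
end
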